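/- Let n ≥ 1 and k ∈ I_n with binary expansion k = (k_1,…,k_n)_2, and write σ̂_n(k) = (k'_1,…,k'_n)_2 for the binary expansion of its image. Then k'_n = k_n, and for every κ with 1 ≤ κ ≤ n−1, k'_κ ≡ 1 + Σ_{i=1}^{n−κ+1} k_{κ+i−1} · g_i^{(n−κ+1)} (mod 2). -/

import Mathlib

/-- The Sierpinski gasket pattern: `g n m` is `g_m^{(n)} ∈ {0,1}` for `1 ≤ m ≤ n`,
defined by `g_1^{(n)} = g_n^{(n)} = 1` and
`g_m^{(n)} = g_{m-1}^{(n-1)} + g_m^{(n-1)} mod 2` for `2 ≤ m ≤ n−1`. -/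
def g : ℕ → ℕ → ℕ
  | 0, _ => 0
  | n + 1, m =>
    if m = 1 ∨ m = n + 1 then 1
    else if 2 ≤ m ∧ m ≤ n then (g n (m - 1) + g n m) % 2
    else 0

/-- The doubling operators `T_0` and `T_1` on binary tuples. -/
def Tmap (α : ℕ) (s : List ℕ) : List ℕ :=
  if α = 0 then s ++ s else s ++ s.map (fun x => 1 - x)

/-- The binary tuple `ν⁽ⁿ⁾ = (T_{g_1^{(n)}} ∘ T_{g_2^{(n)}} ∘ ⋯ ∘ T_{g_{n-1}^{(n)}})(0)`,
of length `2^{n-1}`. -/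
def nuList (n : ℕ) : List ℕ :=
  (List.range (n - 1)).foldr (fun i acc => Tmap (g n (i + 1)) acc) [0]

/-- The entry `ν_m^{(n)}`. -/
def nu (n m : ℕ) : ℕ := (nuList n).getD m 0

/-- The map `σ̂_n` on `I_n = {0, …, 2ⁿ−1}`: `σ̂_1 = id` and
`σ̂_n(j) = σ̂_{n-1}(j mod 2^{n-1}) + 2^{n-1}·c_j` where `c_{2m} = 1 − ν_m^{(n)}` and
`c_{2m+1} = ν_m^{(n)}`. -/
def sigmaHat : ℕ → ℕ → ℕ
  | 0, j => j
  | 1, j => j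
  | n + 2, j =>
    sigmaHat (n + 1) (j % 2 ^ (n + 1)) +
      2 ^ (n + 1) * (if j % 2 = 0 then 1 - nu (n + 2) (j / 2) else nu (n + 2) (j / 2))
/-- The `j`-th binary digit (`1 ≤ j ≤ n`, most significant first) of `c ∈ {0, …, 2ⁿ−1}`:
`c = Σ_{j=1}^n c_j 2^{n−j}`. -/
def digit (n c j : ℕ) : ℕ := c / 2 ^ (n - j) % 2

lemma Tmap_length (α : ℕ) (s : List ℕ) : (Tmap α s).length = 2 * s.length := by
  unfold Tmap; split <;> simp <;> omega

lemma prod_spec (gs : List ℕ) (hgs : ∀ x ∈ gs, x ≤ 1) :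
    (gs.foldr (fun a acc => Tmap a acc) [0]).length = 2 ^ gs.length ∧
    (∀ x ∈ gs.foldr (fun a acc => Tmap a acc) [0], x ≤ 1) ∧
      ∀ m < 2 ^ gs.length,
        (gs.foldr (fun a acc => Tmap a acc) [0]).getD m 0
          = (∑ i ∈ Finset.range gs.length,
              m / 2 ^ (gs.length - 1 - i) % 2 * (gs.getD i 0 % 2)) % 2 := by
  induction gs with
  | nil =>
    refine ⟨by simp, by simp, ?_⟩
    intro m hm
    have : m = 0 := by simpa [Nat.lt_one_iff] using hm
    subst this; simp
  | cons a gs ih =>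
    obtain ⟨hlen, hone, hval⟩ := ih (fun x hx => hgs x (List.mem_cons_of_mem a hx))
    have ha1 : a ≤ 1 := hgs a List.mem_cons_self
    set L := gs.foldr (fun a acc => Tmap a acc) [0] with hL
    have hfold : (a :: gs).foldr (fun a acc => Tmap a acc) [0] = Tmap a L := rfl
    have hlen' : (Tmap a L).length = 2 ^ (gs.length + 1) := by
      rw [Tmap_length, hlen]; ring
    refine ⟨by simpa [hfold] using hlen', ?_, ?_⟩
    · intro x hx
      rw [hfold] at hx
      unfold Tmap at hx
      split at hx
      · simp only [List.mem_append] at hx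
        rcases hx with h | h <;> exact hone x h
      · simp only [List.mem_append, List.mem_map] at hx
        rcases hx with h | ⟨y, hy, hxy⟩
        · exact hone x h
        · omega
    · intro m hm
      rw [hfold]
      simp only [List.length_cons] at hm ⊢
      have hmlt : m < 2 ^ gs.length + 2 ^ gs.length := by
        rw [pow_succ] at hm; omega
      have hsum : (∑ i ∈ Finset.range (gs.length + 1),
            m / 2 ^ (gs.length + 1 - 1 - i) % 2 * ((a :: gs).getD i 0 % 2))
          = (∑ i ∈ Finset.range gs.length, m / 2 ^ (gs.length - 1 - i) % 2 * (gs.getD i 0 % 2))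
            + m / 2 ^ gs.length % 2 * (a % 2) := by
        rw [Finset.sum_range_succ']
        congr 1
        apply Finset.sum_congr rfl
        intro i hi
        rw [show gs.length + 1 - 1 - (i + 1) = gs.length - 1 - i from by omega,
          List.getD_cons_succ]
      rw [hsum]
      by_cases hm2 : m < 2 ^ gs.length
      · have hdiv : m / 2 ^ gs.length = 0 := Nat.div_eq_of_lt hm2
        have hget : (Tmap a L).getD m 0 = L.getD m 0 := by
          unfold Tmap; split <;> exact List.getD_append _ _ _ _ (by omega)
        rw [hget, hval m hm2, hdiv]
        simp
      · have hdiv : m / 2 ^ gs.length = 1 := by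
          rcases Nat.lt_or_ge (m / 2 ^ gs.length) 2 with h | h
          · have := Nat.div_le_div_right (c := 2 ^ gs.length) (Nat.le_of_not_lt hm2)
            rw [Nat.div_self (by positivity)] at this
            omega
          · have := Nat.div_mul_le_self m (2 ^ gs.length)
            nlinarith [Nat.div_mul_le_self m (2 ^ gs.length)]
        set m' := m - 2 ^ gs.length with hm'def
        have hm' : m' < 2 ^ gs.length := by omega
        have hmeq : m = m' + 2 ^ gs.length := by omega
        have hcong : ∀ i < gs.length,
            m / 2 ^ (gs.length - 1 - i) % 2 = m' / 2 ^ (gs.length - 1 - i) % 2 := by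
          intro i hi
          have h2 : 2 ^ gs.length
              = 2 ^ (gs.length - 1 - i) * 2 ^ (gs.length - (gs.length - 1 - i)) := by
            rw [← pow_add]; congr 1; omega
          obtain ⟨d, hd⟩ : ∃ d, 2 ^ (gs.length - (gs.length - 1 - i)) = 2 * d :=
            ⟨2 ^ (gs.length - (gs.length - 1 - i) - 1), by rw [← pow_succ']; congr 1; omega⟩
          conv_lhs => rw [hmeq, h2]
          rw [Nat.add_mul_div_left _ _ (by positivity), hd]
          omega
        have hsum2 : (∑ i ∈ Finset.range gs.length,
              m / 2 ^ (gs.length - 1 - i) % 2 * (gs.getD i 0 % 2))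
            = ∑ i ∈ Finset.range gs.length,
              m' / 2 ^ (gs.length - 1 - i) % 2 * (gs.getD i 0 % 2) := by
          apply Finset.sum_congr rfl
          intro i hi
          rw [hcong i (Finset.mem_range.mp hi)]
        rw [hsum2, hdiv]
        have hmlen : m' < L.length := by omega
        have hLget : L.getD m' 0 ≤ 1 := by
          rw [List.getD_eq_getElem _ _ hmlen]
          exact hone _ (List.getElem_mem hmlen)
        have hv := hval m' hm'
        unfold Tmap
        by_cases ha : a = 0
        · subst ha
          rw [if_pos rfl, List.getD_append_right _ _ _ _ (by omega), hlen]
          have hidx : m - 2 ^ gs.length = m' := rfl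
          rw [hidx, hv]
          simp
        · have ha' : a = 1 := by omega
          subst ha'
          rw [if_neg ha]
          rw [List.getD_append_right _ _ _ _ (by rw [hlen]; omega), hlen]
          have hidx : m - 2 ^ gs.length = m' := rfl
          rw [hidx]
          have hmap : (L.map (fun x => 1 - x)).getD m' 0 = 1 - L.getD m' 0 := by
            rw [List.getD_eq_getElem _ _ (by simpa using hmlen),
                List.getD_eq_getElem _ _ hmlen]
            simp
          rw [hmap, hv]
          omega

lemma g_le_one (n m : ℕ) : g n m ≤ 1 := by
  induction n generalizing m with
  | zero => simp [g]
  | succ n ih =>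
    unfold g
    split
    · exact le_refl 1
    split
    · exact Nat.le_of_lt_succ (Nat.mod_lt _ (by norm_num))
    · exact Nat.zero_le 1

lemma nuList_eq (n : ℕ) :
    nuList n = ((List.range (n - 1)).map (fun i => g n (i + 1))).foldr
      (fun a acc => Tmap a acc) [0] := by
  rw [nuList, List.foldr_map]

lemma nu_spec (n m : ℕ) (hm : m < 2 ^ (n - 1)) :
    nu n m ≤ 1 ∧
      nu n m = (∑ i ∈ Finset.range (n - 1), m / 2 ^ (n - 2 - i) % 2 * g n (i + 1)) % 2 := by
  have hgs : ∀ x ∈ (List.range (n - 1)).map (fun i => g n (i + 1)), x ≤ 1 := by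
    intro x hx
    simp only [List.mem_map] at hx
    obtain ⟨i, _, rfl⟩ := hx
    exact g_le_one _ _
  obtain ⟨hlen, hone, hval⟩ := prod_spec _ hgs
  simp only [List.length_map, List.length_range] at hlen hval
  constructor
  · apply hone
    rw [nu, nuList_eq]
    have hmlen : m < (((List.range (n - 1)).map (fun i => g n (i + 1))).foldr
        (fun a acc => Tmap a acc) [0]).length := by rw [hlen]; exact hm
    rw [List.getD_eq_getElem _ _ hmlen]
    exact List.getElem_mem hmlen
  · rw [nu, nuList_eq, hval m hm]
    congr 1
    apply Finset.sum_congr rfl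
    intro i hi
    simp only [Finset.mem_range] at hi
    rw [List.getD_eq_getElem _ _ (by simpa using hi), List.getElem_map,
      List.getElem_range]
    rw [Nat.mod_eq_of_lt (Nat.lt_succ_of_le (g_le_one n (i + 1))),
      show n - 1 - 1 - i = n - 2 - i from by omega]

lemma nu_le_one (n m : ℕ) : nu n m ≤ 1 := by
  by_cases hm : m < 2 ^ (n - 1)
  · exact (nu_spec n m hm).1
  · rw [nu, List.getD_eq_default]
    · norm_num
    · have : (nuList n).length = 2 ^ (n - 1) := by
        have := (prod_spec ((List.range (n - 1)).map (fun i => g n (i + 1)))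
          (by intro x hx; simp only [List.mem_map] at hx; obtain ⟨i, _, rfl⟩ := hx
              exact g_le_one _ _)).1
        simpa [nuList_eq] using this
      omega

lemma sigmaHat_lt : ∀ n k, k < 2 ^ n → sigmaHat n k < 2 ^ n
  | 0, k, hk => by simpa [sigmaHat] using hk
  | 1, k, hk => by simpa [sigmaHat] using hk
  | n + 2, k, hk => by
    rw [sigmaHat]
    have h1 : sigmaHat (n + 1) (k % 2 ^ (n + 1)) < 2 ^ (n + 1) :=
      sigmaHat_lt (n + 1) _ (Nat.mod_lt _ (by positivity))
    have h2 : (if k % 2 = 0 then 1 - nu (n + 2) (k / 2) else nu (n + 2) (k / 2)) ≤ 1 := by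
      split
      · omega
      · exact nu_le_one _ _
    have h3 : 2 ^ (n + 2) = 2 ^ (n + 1) + 2 ^ (n + 1) := by ring
    nlinarith

lemma sigmaHat_mod_two : ∀ n k, sigmaHat n k % 2 = k % 2
  | 0, k => rfl
  | 1, k => rfl
  | n + 2, k => by
    rw [sigmaHat]
    have h1 : sigmaHat (n + 1) (k % 2 ^ (n + 1)) % 2 = (k % 2 ^ (n + 1)) % 2 :=
      sigmaHat_mod_two (n + 1) _
    have h2 : (k % 2 ^ (n + 1)) % 2 = k % 2 := Nat.mod_mod_of_dvd _ ⟨2 ^ n, by ring⟩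
    have h3 : 2 ^ (n + 1) * (if k % 2 = 0 then 1 - nu (n + 2) (k / 2) else nu (n + 2) (k / 2))
        = 2 * (2 ^ n * (if k % 2 = 0 then 1 - nu (n + 2) (k / 2) else nu (n + 2) (k / 2))) := by
      ring
    rw [h3]
    omega

lemma mod_pow_div (k e E : ℕ) (h : e < E) :
    k % 2 ^ E / 2 ^ e % 2 = k / 2 ^ e % 2 := by
  have h1 : k = k % 2 ^ E + 2 ^ e * (2 ^ (E - e) * (k / 2 ^ E)) := by
    rw [← mul_assoc, ← pow_add, show e + (E - e) = E from by omega]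
    have := Nat.div_add_mod k (2 ^ E)
    omega
  conv_rhs => rw [h1]
  rw [Nat.add_mul_div_left _ _ (by positivity)]
  obtain ⟨d, hd⟩ : ∃ d, 2 ^ (E - e) * (k / 2 ^ E) = 2 * d :=
    ⟨2 ^ (E - e - 1) * (k / 2 ^ E), by
      rw [← mul_assoc, ← pow_succ']
      congr 2
      omega⟩
  rw [hd]
  omega

lemma g_top (n : ℕ) (hn : 1 ≤ n) : g n n = 1 := by
  match n, hn with
  | m + 1, _ => unfold g; rw [if_pos (Or.inr rfl)]

lemma sigmaHat_digits_aux : ∀ n k, 1 ≤ n → k < 2 ^ n →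
    (digit n (sigmaHat n k) n = digit n k n ∧
      ∀ κ, 1 ≤ κ → κ ≤ n - 1 →
        digit n (sigmaHat n k) κ
          = (1 + ∑ i ∈ Finset.Icc 1 (n - κ + 1), digit n k (κ + i - 1) * g (n - κ + 1) i) % 2)
  | 0, k, hn, _ => absurd hn (by omega)
  | 1, k, _, hk => ⟨rfl, fun κ h1 h2 => absurd (h1.trans h2) (by omega)⟩
  | n + 2, k, _, hk => by
    have hlow : k % 2 ^ (n + 1) < 2 ^ (n + 1) := Nat.mod_lt _ (by positivity)
    have hσ : sigmaHat (n + 1) (k % 2 ^ (n + 1)) < 2 ^ (n + 1) := sigmaHat_lt _ _ hlow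
    have hc1 : (if k % 2 = 0 then 1 - nu (n + 2) (k / 2) else nu (n + 2) (k / 2)) ≤ 1 := by
      split
      · omega
      · exact nu_le_one _ _
    have hS : sigmaHat (n + 2) k = sigmaHat (n + 1) (k % 2 ^ (n + 1)) +
        2 ^ (n + 1) * (if k % 2 = 0 then 1 - nu (n + 2) (k / 2) else nu (n + 2) (k / 2)) := by
      rw [sigmaHat]
    constructor
    · simp only [digit, Nat.sub_self, pow_zero, Nat.div_one]
      exact sigmaHat_mod_two _ _
    · intro κ hκ1 hκn
      have hκn' : κ ≤ n + 1 := by omega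
      rcases eq_or_lt_of_le hκ1 with hκeq | hκ2
      · -- κ = 1
        subst hκeq
        have hL : digit (n + 2) (sigmaHat (n + 2) k) 1
            = (if k % 2 = 0 then 1 - nu (n + 2) (k / 2) else nu (n + 2) (k / 2)) := by
          rw [hS, digit, show n + 2 - 1 = n + 1 from rfl,
            Nat.add_mul_div_left _ _ (by positivity : (0:ℕ) < 2 ^ (n + 1)),
            Nat.div_eq_of_lt hσ]
          omega
        rw [hL]
        have hsplit : ∑ i ∈ Finset.Icc 1 (n + 2 - 1 + 1), digit (n + 2) k (1 + i - 1) *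
              g (n + 2 - 1 + 1) i
            = (∑ i ∈ Finset.Icc 1 (n + 1), digit (n + 2) k i * g (n + 2) i)
              + k % 2 := by
          rw [show n + 2 - 1 + 1 = n + 2 from rfl]
          rw [Finset.sum_Icc_succ_top (by omega)]
          congr 1
          · apply Finset.sum_congr rfl
            intro i hi
            rw [show 1 + i - 1 = i from by omega]
          · rw [show 1 + (n + 2) - 1 = n + 2 from by omega, g_top _ (by omega), mul_one]
            simp [digit]
        rw [hsplit]
        have hrange : ∑ i ∈ Finset.Icc 1 (n + 1), digit (n + 2) k i * g (n + 2) i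
            = ∑ i ∈ Finset.range (n + 1), k / 2 / 2 ^ (n - i) % 2 * g (n + 2) (i + 1) := by
          rw [← Finset.Ico_add_one_right_eq_Icc, Finset.sum_Ico_eq_sum_range,
            show n + 1 + 1 - 1 = n + 1 from by omega]
          apply Finset.sum_congr rfl
          intro i hi
          simp only [Finset.mem_range] at hi
          congr 1
          · rw [digit, show 1 + i = i + 1 from by omega,
              show n + 2 - (i + 1) = (n - i) + 1 from by omega, pow_succ',
              ← Nat.div_div_eq_div_mul]
          · congr 1; omega
        rw [hrange]
        have hk2 : k / 2 < 2 ^ (n + 1) := by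
          rw [pow_succ] at hk
          omega
        have hnu := (nu_spec (n + 2) (k / 2) (by simpa using hk2)).2
        simp only [show n + 2 - 1 = n + 1 from rfl, show ∀ i : ℕ, n + 2 - 2 - i = n - i
          from fun i => by omega] at hnu
        have hnule := nu_le_one (n + 2) (k / 2)
        split_ifs with hpar <;> omega
      · -- 2 ≤ κ
        have hIH := (sigmaHat_digits_aux (n + 1) (k % 2 ^ (n + 1)) (by omega) hlow).2
          (κ - 1) (by omega) (by omega)
        have hL : digit (n + 2) (sigmaHat (n + 2) k) κ
            = digit (n + 1) (sigmaHat (n + 1) (k % 2 ^ (n + 1))) (κ - 1) := by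
          rw [hS, digit, digit]
          have hpow : 2 ^ (n + 1) * (if k % 2 = 0 then 1 - nu (n + 2) (k / 2)
                else nu (n + 2) (k / 2))
              = 2 ^ (n + 2 - κ) * (2 ^ (κ - 1) *
                (if k % 2 = 0 then 1 - nu (n + 2) (k / 2) else nu (n + 2) (k / 2))) := by
            rw [← mul_assoc, ← pow_add]
            congr 2
            omega
          rw [hpow, Nat.add_mul_div_left _ _ (by positivity : (0:ℕ) < 2 ^ (n + 2 - κ))]
          obtain ⟨d, hd⟩ : ∃ d, 2 ^ (κ - 1) *
              (if k % 2 = 0 then 1 - nu (n + 2) (k / 2) else nu (n + 2) (k / 2)) = 2 * d :=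
            ⟨2 ^ (κ - 2) * (if k % 2 = 0 then 1 - nu (n + 2) (k / 2) else nu (n + 2) (k / 2)),
              by rw [← mul_assoc, ← pow_succ']; congr 2; omega⟩
          rw [hd, show n + 1 - (κ - 1) = n + 2 - κ from by omega]
          omega
        rw [hL, hIH]
        congr 1
        rw [show n + 1 - (κ - 1) + 1 = n + 2 - κ + 1 from by omega]
        congr 1
        apply Finset.sum_congr rfl
        intro i hi
        simp only [Finset.mem_Icc] at hi
        congr 1
        rw [digit, digit, show n + 1 - (κ - 1 + i - 1) = n + 2 - (κ + i - 1) from by omega]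
        exact mod_pow_div k _ _ (by omega)

/-- Let `k ∈ Iₙ` have binary digits `k_j` and let `σ̂ₙ(k)` have binary
digits `k'_j`. Then `k'_n = k_n` and for `1 ≤ κ ≤ n−1`,
`k'_κ ≡ 1 + Σ_{i=1}^{n−κ+1} k_{κ+i−1} g_i^{(n−κ+1)} (mod 2)`. -/
theorem sigmaHat_digits (n k : ℕ) (hn : 1 ≤ n) (hk : k < 2 ^ n) :
    digit n (sigmaHat n k) n = digit n k n ∧
      ∀ κ, 1 ≤ κ → κ ≤ n - 1 →
        digit n (sigmaHat n k) κ
          = (1 + ∑ i ∈ Finset.Icc 1 (n - κ + 1), digit n k (κ + i - 1) * g (n - κ + 1) i) % 2 :=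
  sigmaHat_digits_aux n k hn hk
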